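/- Let X be a Banach space with a tight by support basis such that there exist two block subspaces Y = [y_n] and Z = [z_n] satisfying: (D1) min(supp y_{n+1} ∪ supp z_{n+1}) ≥ max(supp y_n ∪ supp z_n); (D2) inf{‖y − z‖ : y ∈ Y, z ∈ Z, ‖y‖=‖z‖=1} > 0; and (D3) for every partition ℕ = F ∪ G with P_F|_Z strictly singular, the projection P_G|_Y is not strictly singular. Then the bounded projection P_Y: Y + Z → Y, y + z ↦ y, is not of the form D|_{Y+Z} + S for any bounded diagonal operator D on X and strictly singular operator S. -/

import Mathlib

open scoped BigOperators Classical
open Filter Topology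

structure SchauderBasis' (X : Type*) [NormedAddCommGroup X] [NormedSpace ℝ X] where
  e : ℕ → X
  coord : ℕ → X →L[ℝ] ℝ
  ortho : ∀ i j, coord i (e j) = if i = j then 1 else 0
  expansion : ∀ x : X, HasSum (fun i => coord i x • e i) x

section Defs

variable {X : Type*} [NormedAddCommGroup X] [NormedSpace ℝ X]

def SchauderBasis'.IsUnconditionalWith (b : SchauderBasis' X) (C : ℝ) : Prop :=
  ∀ x y : X, (∀ i, |b.coord i y| ≤ |b.coord i x|) → ‖y‖ ≤ C * ‖x‖

def SchauderBasis'.supp (b : SchauderBasis' X) (x : X) : Set ℕ := {i | b.coord i x ≠ 0}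

def StrictlySingular {E F : Type*} [NormedAddCommGroup E] [NormedSpace ℝ E]
    [NormedAddCommGroup F] [NormedSpace ℝ F] (T : E →L[ℝ] F) : Prop :=
  ∀ Y : Submodule ℝ E, ¬ FiniteDimensional ℝ Y →
    ¬ ∃ c : ℝ, 0 < c ∧ ∀ y ∈ Y, c * ‖y‖ ≤ ‖T y‖

def SchauderBasis'.TightBySupport (b : SchauderBasis' X) : Prop :=
  ∀ Y Z : Submodule ℝ X, IsClosed (Y : Set X) → IsClosed (Z : Set X) →
    ¬ FiniteDimensional ℝ Y → ¬ FiniteDimensional ℝ Z →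
    (∀ y ∈ Y, ∀ z ∈ Z, ∀ i, b.coord i y ≠ 0 → b.coord i z = 0) →
    IsEmpty (Y ≃L[ℝ] Z)

def SchauderBasis'.IsBlockSequence (b : SchauderBasis' X) (x : ℕ → X) : Prop :=
  (∀ n, x n ≠ 0) ∧ (∀ n, (b.supp (x n)).Finite) ∧
    ∀ m n i j, m < n → b.coord i (x m) ≠ 0 → b.coord j (x n) ≠ 0 → i < j

def closedSpan (x : ℕ → X) : Submodule ℝ X :=
  (Submodule.span ℝ (Set.range x)).topologicalClosure

def SchauderBasis'.IsDiagonal (b : SchauderBasis' X) (D : X →L[ℝ] X) : Prop :=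
  ∀ i, ∃ lam : ℝ, D (b.e i) = lam • b.e i

def IsL1Average (b : SchauderBasis' X) (x : X) (n : ℕ) (c : ℝ) : Prop :=
  0 < n ∧ 1 ≤ c ∧ ∃ xs : Fin n → X,
    (∀ i, ‖xs i‖ ≤ 1) ∧
    (∀ i j : Fin n, i < j → ∀ p q, b.coord p (xs i) ≠ 0 → b.coord q (xs j) ≠ 0 → p < q) ∧
    x = (n : ℝ)⁻¹ • ∑ i, xs i ∧ 1 / c ≤ ‖x‖

end Defs

section AuxProof

variable {X : Type*} [NormedAddCommGroup X] [NormedSpace ℝ X]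

lemma SchauderBasis'.eq_zero_of_coord {b : SchauderBasis' X} {x : X}
    (h : ∀ i, b.coord i x = 0) : x = 0 := by
  have h2 : HasSum (fun i => b.coord i x • b.e i) 0 := by
    have : (fun i => b.coord i x • b.e i) = fun _ => (0 : X) := by
      funext i; simp [h i]
    rw [this]; exact hasSum_zero
  exact (b.expansion x).unique h2

lemma SchauderBasis'.coord_ext {b : SchauderBasis' X} {x y : X}
    (h : ∀ i, b.coord i x = b.coord i y) : x = y := by
  have : x - y = 0 := b.eq_zero_of_coord (x := x - y) (fun i => by simp [h i])
  exact sub_eq_zero.mp this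

/-- vertex induction: nonneg multipliers bounded by `c`. -/
lemma sum_smul_le_aux (f : ℕ → X) (M c : ℝ) (hc : 0 < c)
    (hM : ∀ s : Finset ℕ, ‖∑ i ∈ s, f i‖ ≤ M) (u : Finset ℕ) :
    ∀ (s : Finset ℕ) (m : ℕ → ℝ), (∀ i, 0 ≤ m i) → (∀ i, m i ≤ c) →
      (∀ i ∈ u, i ∉ s → m i = 0 ∨ m i = c) →
      ‖∑ i ∈ u, m i • f i‖ ≤ c * M := by
  intro s
  induction s using Finset.induction_on with
  | empty =>
      intro m hm0 hmc hdich
      have key : ∑ i ∈ u, m i • f i = c • ∑ i ∈ u.filter (fun i => m i = c), f i := by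
        rw [Finset.smul_sum]
        rw [← Finset.sum_filter_add_sum_filter_not u (fun i => m i = c) (fun i => m i • f i)]
        have h2 : ∑ i ∈ u.filter (fun i => ¬ m i = c), m i • f i = 0 := by
          apply Finset.sum_eq_zero
          intro i hi
          rw [Finset.mem_filter] at hi
          rcases hdich i hi.1 (Finset.notMem_empty i) with h | h
          · simp [h]
          · exact absurd h hi.2
        rw [h2, add_zero]
        exact Finset.sum_congr rfl (fun i hi => by
          rw [Finset.mem_filter] at hi; rw [hi.2])
      rw [key, norm_smul, Real.norm_eq_abs, abs_of_pos hc]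
      exact mul_le_mul_of_nonneg_left (hM _) hc.le
  | @insert a s' ha ih =>
      intro m hm0 hmc hdich
      set θ : ℝ := m a / c with hθ
      have hθ0 : 0 ≤ θ := div_nonneg (hm0 a) hc.le
      have hθ1 : θ ≤ 1 := (div_le_one hc).mpr (hmc a)
      set m0 : ℕ → ℝ := Function.update m a 0 with hm0d
      set mc : ℕ → ℝ := Function.update m a c with hmcd
      have key : ∑ i ∈ u, m i • f i
          = (1 - θ) • ∑ i ∈ u, m0 i • f i + θ • ∑ i ∈ u, mc i • f i := by
        rw [Finset.smul_sum, Finset.smul_sum, ← Finset.sum_add_distrib]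
        refine Finset.sum_congr rfl (fun i _ => ?_)
        by_cases hia : i = a
        · subst hia
          simp only [hm0d, hmcd, Function.update_self, smul_smul, mul_zero, zero_smul,
            zero_add, hθ, smul_zero]
          try rw [div_mul_cancel₀ _ hc.ne']
        · simp only [hm0d, hmcd, Function.update_of_ne hia]
          rw [smul_smul, smul_smul, ← add_smul]
          congr 1
          ring
      have h0 : ‖∑ i ∈ u, m0 i • f i‖ ≤ c * M := by
        apply ih m0
        · intro i; by_cases hia : i = a <;> simp [hm0d, hia, hm0 i]
        · intro i; by_cases hia : i = a <;> simp [hm0d, hia, hmc i, hc.le]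
        · intro i hiu his'
          by_cases hia : i = a
          · left; simp [hm0d, hia]
          · simp only [hm0d, Function.update_of_ne hia]
            exact hdich i hiu (by simp [Finset.mem_insert, hia, his'])
      have hcM : ‖∑ i ∈ u, mc i • f i‖ ≤ c * M := by
        apply ih mc
        · intro i; by_cases hia : i = a <;> simp [hmcd, hia, hm0 i, hc.le]
        · intro i; by_cases hia : i = a <;> simp [hmcd, hia, hmc i]
        · intro i hiu his'
          by_cases hia : i = a
          · right; simp [hmcd, hia]
          · simp only [hmcd, Function.update_of_ne hia]
            exact hdich i hiu (by simp [Finset.mem_insert, hia, his'])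
      calc ‖∑ i ∈ u, m i • f i‖
          ≤ ‖(1 - θ) • ∑ i ∈ u, m0 i • f i‖ + ‖θ • ∑ i ∈ u, mc i • f i‖ := by
            rw [key]; exact norm_add_le _ _
        _ = (1 - θ) * ‖∑ i ∈ u, m0 i • f i‖ + θ * ‖∑ i ∈ u, mc i • f i‖ := by
            rw [norm_smul, norm_smul, Real.norm_eq_abs, Real.norm_eq_abs,
              abs_of_nonneg (by linarith), abs_of_nonneg hθ0]
        _ ≤ (1 - θ) * (c * M) + θ * (c * M) := by
            have := mul_le_mul_of_nonneg_left h0 (by linarith : (0:ℝ) ≤ 1 - θ)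
            have := mul_le_mul_of_nonneg_left hcM hθ0
            nlinarith
        _ = c * M := by ring

lemma sum_smul_le_signed (f : ℕ → X) (M c : ℝ) (hc : 0 < c)
    (hM : ∀ s : Finset ℕ, ‖∑ i ∈ s, f i‖ ≤ M)
    (m : ℕ → ℝ) (hm : ∀ i, |m i| ≤ c) (u : Finset ℕ) :
    ‖∑ i ∈ u, m i • f i‖ ≤ 2 * c * M := by
  set mp : ℕ → ℝ := fun i => max (m i) 0 with hmp
  set mn : ℕ → ℝ := fun i => max (-(m i)) 0 with hmn
  have hsplit : ∑ i ∈ u, m i • f i = ∑ i ∈ u, mp i • f i - ∑ i ∈ u, mn i • f i := by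
    rw [← Finset.sum_sub_distrib]
    refine Finset.sum_congr rfl (fun i _ => ?_)
    rw [← sub_smul]
    congr 1
    simp only [hmp, hmn]
    rcases le_total (m i) 0 with h | h
    · rw [max_eq_right h, max_eq_left (by linarith)]; ring
    · rw [max_eq_left h, max_eq_right (by linarith)]; ring
  have hp : ‖∑ i ∈ u, mp i • f i‖ ≤ c * M := by
    apply sum_smul_le_aux f M c hc hM u u
    · intro i; exact le_max_right _ _
    · intro i; exact max_le (le_of_abs_le (hm i)) hc.le
    · intro i hiu hius; exact absurd hiu hius
  have hn : ‖∑ i ∈ u, mn i • f i‖ ≤ c * M := by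
    apply sum_smul_le_aux f M c hc hM u u
    · intro i; exact le_max_right _ _
    · intro i
      refine max_le ?_ hc.le
      have := (abs_le.mp (hm i)).1; linarith
    · intro i hiu hius; exact absurd hiu hius
  calc ‖∑ i ∈ u, m i • f i‖ ≤ ‖∑ i ∈ u, mp i • f i‖ + ‖∑ i ∈ u, mn i • f i‖ := by
        rw [hsplit]; exact norm_sub_le _ _
    _ ≤ c * M + c * M := add_le_add hp hn
    _ = 2 * c * M := by ring

lemma norm_le_of_hasSum_smul (f : ℕ → X) (M c : ℝ) (hc : 0 < c)
    (hM : ∀ s : Finset ℕ, ‖∑ i ∈ s, f i‖ ≤ M)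
    (m : ℕ → ℝ) (hm : ∀ i, |m i| ≤ c) (w : X)
    (hw : HasSum (fun i => m i • f i) w) : ‖w‖ ≤ 2 * c * M := by
  have h1 : Tendsto (fun s : Finset ℕ => ‖∑ i ∈ s, m i • f i‖) atTop (𝓝 ‖w‖) :=
    hw.norm
  exact le_of_tendsto' h1 (fun s => sum_smul_le_signed f M c hc hM m hm s)

end AuxProof

/-- if block subspaces Y = [yₙ], Z = [zₙ] of a tight by support
space satisfy (D1), (D2) and (D3), then the bounded projection
P_Y : Y + Z → Y is not a strictly singular perturbation of a restriction of a
diagonal operator. -/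
theorem stmt13 {X : Type*} [NormedAddCommGroup X] [NormedSpace ℝ X] [CompleteSpace X]
    (b : SchauderBasis' X) (hb : b.TightBySupport)
    (P : Set ℕ → (X →L[ℝ] X))
    (hP : ∀ (G : Set ℕ) (x : X) (i : ℕ),
      b.coord i (P G x) = if i ∈ G then b.coord i x else 0)
    (y z : ℕ → X) (hy : b.IsBlockSequence y) (hz : b.IsBlockSequence z)
    (hD1 : ∀ n i j, (b.coord i (y n) ≠ 0 ∨ b.coord i (z n) ≠ 0) →
      (b.coord j (y (n + 1)) ≠ 0 ∨ b.coord j (z (n + 1)) ≠ 0) → i ≤ j)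
    (hD2 : ∃ δ > (0 : ℝ), ∀ u ∈ closedSpan y, ∀ v ∈ closedSpan z,
      ‖u‖ = 1 → ‖v‖ = 1 → δ ≤ ‖u - v‖)
    (hD3 : ∀ F G : Set ℕ, F ∪ G = Set.univ → F ∩ G = ∅ →
      StrictlySingular ((P F).comp (closedSpan z).subtypeL) →
      ¬ StrictlySingular ((P G).comp (closedSpan y).subtypeL))
    (Q : ↥(closedSpan y ⊔ closedSpan z) →L[ℝ] X)
    (hQ : ∀ w : ↥(closedSpan y ⊔ closedSpan z), ∀ u ∈ closedSpan y, ∀ v ∈ closedSpan z,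
      (w : X) = u + v → Q w = u) :
    ¬ ∃ (D : X →L[ℝ] X) (S : ↥(closedSpan y ⊔ closedSpan z) →L[ℝ] X),
        b.IsDiagonal D ∧ StrictlySingular S ∧
        Q = D.comp (closedSpan y ⊔ closedSpan z).subtypeL + S := by
  rintro ⟨D, S, hDdiag, hS, hEq⟩
  classical
  choose lam hlam using hDdiag
  -- coordinates of D x
  have coordD : ∀ (x : X) (i : ℕ), b.coord i (D x) = lam i * b.coord i x := by
    intro x i
    have h1 : HasSum (fun j => ((b.coord i).comp D) (b.coord j x • b.e j))
        (((b.coord i).comp D) x) := ((b.coord i).comp D).hasSum (b.expansion x)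
    have h2 : (fun j => ((b.coord i).comp D) (b.coord j x • b.e j))
        = fun j => if j = i then lam i * b.coord i x else 0 := by
      funext j
      simp only [ContinuousLinearMap.comp_apply, map_smul, hlam j, b.ortho i j, smul_eq_mul]
      by_cases hji : j = i
      · subst hji; simp; ring
      · simp [hji, Ne.symm hji]
    have h3 : HasSum (fun j => if j = i then lam i * b.coord i x else 0)
        (lam i * b.coord i x) := by
      have h4 := hasSum_single (f := fun j => if j = i then lam i * b.coord i x else 0) i
        (fun j hj => by simp [hj])
      simpa using h4
    rw [h2] at h1
    have h5 := h1.unique h3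
    simpa using h5
  -- finite coordinate projections
  have FP : ∀ (s : Finset ℕ) (x : X), P ↑s x = ∑ i ∈ s, b.coord i x • b.e i := by
    intro s x
    apply b.coord_ext
    intro j
    rw [hP, map_sum]
    have hterm : ∀ i ∈ s, b.coord j (b.coord i x • b.e i)
        = if j = i then b.coord i x else 0 := by
      intro i _
      rw [map_smul, b.ortho j i, smul_eq_mul]
      by_cases h : j = i <;> simp [h]
    rw [Finset.sum_congr rfl hterm, Finset.sum_ite_eq]
    simp [Finset.mem_coe]
  -- pointwise bound on finite projections
  have PTW : ∀ x : X, ∃ C, ∀ s : Finset ℕ, ‖P ↑s x‖ ≤ C := by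
    intro x
    have hsum : Summable fun i => b.coord i x • b.e i := (b.expansion x).summable
    obtain ⟨s₀, hs₀⟩ := summable_iff_vanishing.mp hsum (Metric.ball 0 1)
      (Metric.ball_mem_nhds 0 one_pos)
    refine ⟨∑ i ∈ s₀, ‖b.coord i x • b.e i‖ + 1, fun s => ?_⟩
    rw [FP]
    rw [← Finset.sum_inter_add_sum_sdiff s s₀ (fun i => b.coord i x • b.e i)]
    refine (norm_add_le _ _).trans (add_le_add ?_ ?_)
    · refine (norm_sum_le _ _).trans ?_
      exact Finset.sum_le_sum_of_subset_of_nonneg Finset.inter_subset_right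
        (fun i _ _ => norm_nonneg _)
    · have h1 := hs₀ (s \ s₀) Finset.sdiff_disjoint
      rw [Metric.mem_ball, dist_zero_right] at h1
      exact h1.le
  -- uniform bound (Banach–Steinhaus)
  obtain ⟨K, hK⟩ := banach_steinhaus (g := fun s : Finset ℕ => P ↑s) PTW
  set K' : ℝ := max K 1 with hK'def
  have hK'0 : (0:ℝ) < K' := lt_of_lt_of_le one_pos (le_max_right _ _)
  have hfin : ∀ (g : X) (s : Finset ℕ), ‖∑ i ∈ s, b.coord i g • b.e i‖ ≤ K' * ‖g‖ := by
    intro g s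
    rw [← FP]
    calc ‖P ↑s g‖ ≤ ‖P ↑s‖ * ‖g‖ := (P ↑s).le_opNorm g
      _ ≤ K' * ‖g‖ := mul_le_mul_of_nonneg_right ((hK s).trans (le_max_left _ _))
          (norm_nonneg _)
  set F : Set ℕ := {i | 1/2 ≤ |lam i|} with hFdef
  -- key inequality A
  have keyA : ∀ v : X, ‖P F v‖ ≤ 2 * 2 * (K' * ‖D v‖) := by
    intro v
    set m : ℕ → ℝ := fun i => if i ∈ F then (lam i)⁻¹ else 0 with hmdef
    have hmb : ∀ i, |m i| ≤ 2 := by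
      intro i
      by_cases hi : i ∈ F
      · have h2 : (1:ℝ)/2 ≤ |lam i| := hi
        simp only [hmdef, if_pos hi, abs_inv]
        calc |lam i|⁻¹ ≤ ((1:ℝ)/2)⁻¹ := inv_anti₀ (by norm_num) h2
          _ = 2 := by norm_num
      · simp [hmdef, hi]
    have hhs : HasSum (fun i => m i • (b.coord i (D v) • b.e i)) (P F v) := by
      have h1 := b.expansion (P F v)
      have h2 : (fun i => b.coord i (P F v) • b.e i)
          = fun i => m i • (b.coord i (D v) • b.e i) := by
        funext i
        rw [hP, coordD]
        by_cases hi : i ∈ F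
        · have hne : lam i ≠ 0 := by
            intro h0
            have h2 : (1:ℝ)/2 ≤ |lam i| := hi
            rw [h0, abs_zero] at h2; linarith
          simp only [hmdef, if_pos hi, smul_smul, inv_mul_cancel_left₀ hne]
        · simp [hmdef, hi]
      rw [h2] at h1
      exact h1
    exact norm_le_of_hasSum_smul _ (K' * ‖D v‖) 2 (by norm_num)
      (fun s => hfin (D v) s) m hmb _ hhs
  -- key inequality B
  have keyB : ∀ u : X, ‖P Fᶜ u‖ ≤ 2 * 2 * (K' * ‖u - D u‖) := by
    intro u
    set m : ℕ → ℝ := fun i => if i ∈ Fᶜ then (1 - lam i)⁻¹ else 0 with hmdef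
    have habs : ∀ i, i ∈ Fᶜ → (1:ℝ)/2 ≤ |1 - lam i| := by
      intro i hi
      have h1 : ¬ ((1:ℝ)/2 ≤ |lam i|) := hi
      have h2 : |lam i| < 1/2 := lt_of_not_ge h1
      have h3 : |(1:ℝ)| - |lam i| ≤ |1 - lam i| := abs_sub_abs_le_abs_sub 1 (lam i)
      rw [abs_one] at h3
      linarith
    have hne : ∀ i ∈ Fᶜ, (1 - lam i) ≠ 0 := by
      intro i hi h0
      have h1 := habs i hi
      rw [h0, abs_zero] at h1; linarith
    have hmb : ∀ i, |m i| ≤ 2 := by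
      intro i
      by_cases hi : i ∈ Fᶜ
      · have h2 := habs i hi
        simp only [hmdef, if_pos hi, abs_inv]
        calc |1 - lam i|⁻¹ ≤ ((1:ℝ)/2)⁻¹ := inv_anti₀ (by norm_num) h2
          _ = 2 := by norm_num
      · simp only [hmdef, if_neg hi]; norm_num
    have hcg : ∀ i, b.coord i (u - D u) = (1 - lam i) * b.coord i u := by
      intro i; rw [map_sub, coordD]; ring
    have hhs : HasSum (fun i => m i • (b.coord i (u - D u) • b.e i)) (P Fᶜ u) := by
      have h1 := b.expansion (P Fᶜ u)
      have h2 : (fun i => b.coord i (P Fᶜ u) • b.e i)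
          = fun i => m i • (b.coord i (u - D u) • b.e i) := by
        funext i
        rw [hP, hcg]
        by_cases hi : i ∈ Fᶜ
        · simp only [hmdef, if_pos hi, smul_smul, inv_mul_cancel_left₀ (hne i hi)]
        · simp only [hmdef, if_neg hi, zero_smul]
      rw [h2] at h1
      exact h1
    exact norm_le_of_hasSum_smul _ (K' * ‖u - D u‖) 2 (by norm_num)
      (fun s => hfin (u - D u) s) m hmb _ hhs
  -- the decomposition equation pointwise
  have hDv : ∀ w : ↥(closedSpan y ⊔ closedSpan z), Q w = D (w : X) + S w := by
    intro w
    rw [hEq]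
    rfl
  -- P_F restricted to Z is strictly singular
  have SSA : StrictlySingular ((P F).comp (closedSpan z).subtypeL) := by
    intro W hW
    rintro ⟨c, hc, hcb⟩
    set j : ↥(closedSpan z) →ₗ[ℝ] ↥(closedSpan y ⊔ closedSpan z) :=
      Submodule.inclusion le_sup_right with hjdef
    have hWmap : ¬ FiniteDimensional ℝ ↥(W.map j) := by
      intro hfin
      apply hW
      have e := Submodule.equivMapOfInjective j
        (Submodule.inclusion_injective le_sup_right) W
      exact Module.Finite.equiv e.symm
    apply hS (W.map j) hWmap
    refine ⟨c / (2 * 2 * K'), by positivity, ?_⟩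
    rintro w' hw'
    obtain ⟨w, hwW, rfl⟩ := Submodule.mem_map.mp hw'
    have hco : ((j w : ↥(closedSpan y ⊔ closedSpan z)) : X) = (w : X) := rfl
    have hnorm : ‖j w‖ = ‖w‖ := rfl
    have hQ0 : Q (j w) = 0 :=
      hQ (j w) 0 (zero_mem _) (w : X) w.2 (by rw [zero_add]; exact hco)
    have heq := hDv (j w)
    rw [hQ0, hco] at heq
    have hsw : S (j w) = -(D (w : X)) := eq_neg_of_add_eq_zero_right heq.symm
    have h3 : ‖S (j w)‖ = ‖D (w : X)‖ := by rw [hsw, norm_neg]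
    have h1 : c * ‖w‖ ≤ ‖P F (w : X)‖ := by
      have h4 := hcb w hwW
      simpa using h4
    have h2 := keyA (w : X)
    rw [hnorm, div_mul_eq_mul_div, div_le_iff₀ (by positivity)]
    calc c * ‖w‖ ≤ 2 * 2 * (K' * ‖D (w : X)‖) := h1.trans h2
      _ = ‖S (j w)‖ * (2 * 2 * K') := by rw [h3]; ring
  -- P_{Fᶜ} restricted to Y is strictly singular
  have SSB : StrictlySingular ((P Fᶜ).comp (closedSpan y).subtypeL) := by
    intro W hW
    rintro ⟨c, hc, hcb⟩
    set j : ↥(closedSpan y) →ₗ[ℝ] ↥(closedSpan y ⊔ closedSpan z) :=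
      Submodule.inclusion le_sup_left with hjdef
    have hWmap : ¬ FiniteDimensional ℝ ↥(W.map j) := by
      intro hfin
      apply hW
      have e := Submodule.equivMapOfInjective j
        (Submodule.inclusion_injective le_sup_left) W
      exact Module.Finite.equiv e.symm
    apply hS (W.map j) hWmap
    refine ⟨c / (2 * 2 * K'), by positivity, ?_⟩
    rintro w' hw'
    obtain ⟨w, hwW, rfl⟩ := Submodule.mem_map.mp hw'
    have hco : ((j w : ↥(closedSpan y ⊔ closedSpan z)) : X) = (w : X) := rfl
    have hnorm : ‖j w‖ = ‖w‖ := rfl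
    have hQ1 : Q (j w) = (w : X) :=
      hQ (j w) (w : X) w.2 0 (zero_mem _) (by rw [add_zero]; exact hco)
    have heq := hDv (j w)
    rw [hQ1, hco] at heq
    have hsw : S (j w) = (w : X) - D (w : X) := (sub_eq_iff_eq_add'.mpr heq).symm
    have h3 : ‖S (j w)‖ = ‖(w : X) - D (w : X)‖ := by rw [hsw]
    have h1 : c * ‖w‖ ≤ ‖P Fᶜ (w : X)‖ := by
      have h4 := hcb w hwW
      simpa using h4
    have h2 := keyB (w : X)
    rw [hnorm, div_mul_eq_mul_div, div_le_iff₀ (by positivity)]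
    calc c * ‖w‖ ≤ 2 * 2 * (K' * ‖(w : X) - D (w : X)‖) := h1.trans h2
      _ = ‖S (j w)‖ * (2 * 2 * K') := by rw [h3]; ring
  exact hD3 F Fᶜ (Set.union_compl_self F) (Set.inter_compl_self F) SSA SSB
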